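/- Let k be an algebraically closed field of characteristic different from 2, and let A, B be 2 × 2 matrices over k with trace(A) = 0 and trace(B) = 0. Assume trace(A·A) ≠ 0 and trace(A·A)·trace(B·B) ≠ (trace(A·B))². Then there exist an invertible matrix P ∈ GL₂(k) and scalars t, s, c ∈ k with t ≠ 0 and c ≠ 0 such that P·A·P⁻¹ is the diagonal matrix with diagonal entries (t, −t), P·B·P⁻¹ is the matrix with rows (s, 1) and (c, −s), and moreover 2·t² = trace(A·A), 2·t·s = trace(A·B), and 2·(s² + c) = trace(B·B). -/

import Mathlib

open Matrix

private lemma conj_trace {k : Type*} [Field k]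
    (P Pinv M : Matrix (Fin 2) (Fin 2) k) (h2 : Pinv * P = 1) :
    (P * M * Pinv).trace = M.trace := by
  rw [Matrix.trace_mul_comm, ← mul_assoc, h2, one_mul]

private lemma key {k : Type*} [Field k] (hchar : (2 : k) ≠ 0)
    (A B : Matrix (Fin 2) (Fin 2) k) (hB : B.trace = 0)
    (hAB : (A * A).trace * (B * B).trace ≠ ((A * B).trace) ^ 2)
    (t : k) (ht : t ≠ 0) (htA : 2 * t ^ 2 = (A * A).trace)
    (P Pinv : Matrix (Fin 2) (Fin 2) k)
    (h1 : P * Pinv = 1) (h2 : Pinv * P = 1)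
    (hPA : P * A * Pinv = !![t, 0; 0, -t]) :
    ∃ (P : GL (Fin 2) k) (t s c : k), t ≠ 0 ∧ c ≠ 0 ∧
      (P : Matrix (Fin 2) (Fin 2) k) * A * ((P⁻¹ : GL (Fin 2) k) : Matrix (Fin 2) (Fin 2) k)
        = !![t, 0; 0, -t] ∧
      (P : Matrix (Fin 2) (Fin 2) k) * B * ((P⁻¹ : GL (Fin 2) k) : Matrix (Fin 2) (Fin 2) k)
        = !![s, 1; c, -s] ∧
      2 * t ^ 2 = (A * A).trace ∧
      2 * t * s = (A * B).trace ∧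
      2 * (s ^ 2 + c) = (B * B).trace := by
  set B1 := P * B * Pinv with hB1
  set s := B1 0 0 with hs
  set u := B1 0 1 with hu'
  set v := B1 1 0 with hv'
  have htrB1 : B1.trace = 0 := by rw [hB1, conj_trace _ _ _ h2, hB]
  have hB1eta : B1 = !![s, u; v, -s] := by
    have h11 : B1 1 1 = -s := by
      rw [Matrix.trace_fin_two] at htrB1
      linear_combination htrB1
    conv_lhs => rw [Matrix.eta_fin_two B1]
    rw [h11]
  have hconjmul : ∀ M N : Matrix (Fin 2) (Fin 2) k,
      (P * M * Pinv) * (P * N * Pinv) = P * (M * N) * Pinv := by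
    intro M N
    simp only [mul_assoc]
    rw [← mul_assoc Pinv P, h2, one_mul]
  have htAB : (A * B).trace = 2 * t * s := by
    have e : (A * B).trace = (!![t, 0; 0, -t] * B1).trace := by
      rw [← conj_trace P Pinv (A * B) h2, ← hconjmul, hPA]
    rw [e, hB1eta, Matrix.mul_fin_two, Matrix.trace_fin_two]
    simp
    ring
  have htBB : (B * B).trace = 2 * (s ^ 2 + u * v) := by
    have e : (B * B).trace = (B1 * B1).trace := by
      rw [← conj_trace P Pinv (B * B) h2, ← hconjmul]
    rw [e, hB1eta, Matrix.mul_fin_two, Matrix.trace_fin_two]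
    simp
    ring
  have huv : u * v ≠ 0 := by
    intro h
    apply hAB
    rw [← htA, htBB, htAB]
    linear_combination (4 * t ^ 2) * h
  have hu : u ≠ 0 := left_ne_zero_of_mul huv
  set D : Matrix (Fin 2) (Fin 2) k := !![1, 0; 0, u] with hD
  set Dinv : Matrix (Fin 2) (Fin 2) k := !![1, 0; 0, u⁻¹] with hDinv
  have hDD : D * Dinv = 1 := by
    rw [hD, hDinv, Matrix.mul_fin_two, Matrix.one_fin_two]
    simp [mul_inv_cancel₀ hu]
  have hDD' : Dinv * D = 1 := by
    rw [hD, hDinv, Matrix.mul_fin_two, Matrix.one_fin_two]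
    simp [inv_mul_cancel₀ hu]
  set Pf := D * P with hPf
  set Pfinv := Pinv * Dinv with hPfinv
  have hf1 : Pf * Pfinv = 1 := by
    rw [hPf, hPfinv, mul_assoc, ← mul_assoc P, h1, one_mul, hDD]
  have hf2 : Pfinv * Pf = 1 := by
    rw [hPf, hPfinv, mul_assoc, ← mul_assoc Dinv, hDD', one_mul, h2]
  have hconjf : ∀ M : Matrix (Fin 2) (Fin 2) k,
      Pf * M * Pfinv = D * (P * M * Pinv) * Dinv := by
    intro M
    simp only [hPf, hPfinv, mul_assoc]
  have hgA : Pf * A * Pfinv = !![t, 0; 0, -t] := by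
    rw [hconjf, hPA, hD, hDinv, Matrix.mul_fin_two, Matrix.mul_fin_two]
    congr 1 <;> simp <;> field_simp
  have hgB : Pf * B * Pfinv = !![s, 1; u * v, -s] := by
    rw [hconjf, ← hB1, hB1eta, hD, hDinv, Matrix.mul_fin_two, Matrix.mul_fin_two]
    congr 1 <;> simp <;> field_simp <;> exact ⟨trivial, trivial⟩
  refine ⟨⟨Pf, Pfinv, hf1, hf2⟩, t, s, u * v, ht, huv, hgA, hgB, htA, htAB.symm, htBB.symm⟩

/-- Over an algebraically closed field `k` with `char k ≠ 2`, a pair of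
traceless `2 × 2` matrices `A, B` with `trace (A·A) ≠ 0` and
`trace (A·A)·trace (B·B) ≠ (trace (A·B))²` can be simultaneously conjugated into the normal
form `(diag(t, -t), [[s, 1], [c, -s]])` with `t ≠ 0`, `c ≠ 0`, where
`2t² = trace (A·A)`, `2ts = trace (A·B)` and `2(s² + c) = trace (B·B)`. -/
theorem pair_normal_form
    {k : Type*} [Field k] [IsAlgClosed k] (hchar : (2 : k) ≠ 0)
    (A B : Matrix (Fin 2) (Fin 2) k)
    (hA : A.trace = 0) (hB : B.trace = 0)
    (hA2 : (A * A).trace ≠ 0)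
    (hAB : (A * A).trace * (B * B).trace ≠ ((A * B).trace) ^ 2) :
    ∃ (P : GL (Fin 2) k) (t s c : k), t ≠ 0 ∧ c ≠ 0 ∧
      (P : Matrix (Fin 2) (Fin 2) k) * A * ((P⁻¹ : GL (Fin 2) k) : Matrix (Fin 2) (Fin 2) k)
        = !![t, 0; 0, -t] ∧
      (P : Matrix (Fin 2) (Fin 2) k) * B * ((P⁻¹ : GL (Fin 2) k) : Matrix (Fin 2) (Fin 2) k)
        = !![s, 1; c, -s] ∧
      2 * t ^ 2 = (A * A).trace ∧
      2 * t * s = (A * B).trace ∧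
      2 * (s ^ 2 + c) = (B * B).trace := by
  set a := A 0 0 with ha
  set b := A 0 1 with hb
  set c := A 1 0 with hc
  clear_value a b c
  have h11 : A 1 1 = -a := by
    rw [Matrix.trace_fin_two] at hA
    linear_combination hA + ha
  have hAeta : A = !![a, b; c, -a] := by
    conv_lhs => rw [Matrix.eta_fin_two A]
    rw [h11, ha, hb, hc]
  have htr : (A * A).trace = 2 * (a ^ 2 + b * c) := by
    rw [hAeta, Matrix.mul_fin_two, Matrix.trace_fin_two]
    simp
    ring
  by_cases hb0 : b = 0
  · by_cases hc0 : c = 0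
    · have ha0 : a ≠ 0 := by
        intro h
        exact hA2 (by rw [htr, h, hb0]; ring)
      refine key hchar A B hB hAB a ha0 (by rw [htr, hb0]; ring) 1 1 (one_mul 1) (one_mul 1) ?_
      rw [one_mul, mul_one, hAeta, hb0, hc0]
    · have ha0 : a ≠ 0 := by
        intro h
        exact hA2 (by rw [htr, h, hb0]; ring)
      refine key hchar A B hB hAB a ha0 (by rw [htr, hb0]; ring)
        !![1 / (2 * a), 0; -c / (2 * a), 1] !![2 * a, 0; c, 1] ?_ ?_ ?_
      · ext i j
        fin_cases i <;> fin_cases j <;>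
          simp [Matrix.mul_apply, Fin.sum_univ_two, Matrix.one_apply] <;> field_simp <;> ring
      · ext i j
        fin_cases i <;> fin_cases j <;>
          simp [Matrix.mul_apply, Fin.sum_univ_two, Matrix.one_apply] <;> field_simp <;> ring
      · have hAQ : A * !![2 * a, 0; c, 1] = !![2 * a, 0; c, 1] * !![a, 0; 0, -a] := by
          rw [hAeta, hb0]
          ext i j
          fin_cases i <;> fin_cases j <;>
            simp [Matrix.mul_apply, Fin.sum_univ_two] <;> ring
        have h1 : !![1 / (2 * a), 0; -c / (2 * a), 1] * !![2 * a, 0; c, 1]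
            = (1 : Matrix (Fin 2) (Fin 2) k) := by
          ext i j
          fin_cases i <;> fin_cases j <;>
            simp [Matrix.mul_apply, Fin.sum_univ_two, Matrix.one_apply] <;> field_simp <;> ring
        rw [mul_assoc, hAQ, ← mul_assoc, h1, one_mul]
  · obtain ⟨t, ht2⟩ := IsAlgClosed.exists_pow_nat_eq (a ^ 2 + b * c) (n := 2) (by norm_num)
    have ht0 : t ≠ 0 := by
      intro h
      apply hA2
      rw [htr, ← ht2, h]
      ring
    refine key hchar A B hB hAB t ht0 (by rw [htr, ht2])
      !![(t + a) / (2 * b * t), 1 / (2 * t); (t - a) / (2 * b * t), -(1 / (2 * t))]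
      !![b, b; t - a, -t - a] ?_ ?_ ?_
    · ext i j
      fin_cases i <;> fin_cases j <;>
        simp [Matrix.mul_apply, Fin.sum_univ_two, Matrix.one_apply] <;> field_simp <;> ring
    · ext i j
      fin_cases i <;> fin_cases j <;>
        simp [Matrix.mul_apply, Fin.sum_univ_two, Matrix.one_apply] <;> field_simp <;> ring
    · have hAQ : A * !![b, b; t - a, -t - a]
          = !![b, b; t - a, -t - a] * !![t, 0; 0, -t] := by
        rw [hAeta]
        ext i j
        fin_cases i <;> fin_cases j <;>
          simp [Matrix.mul_apply, Fin.sum_univ_two] <;>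
          (first | ring1 | linear_combination ht2 | linear_combination -ht2)
      have h1 : !![(t + a) / (2 * b * t), 1 / (2 * t); (t - a) / (2 * b * t), -(1 / (2 * t))]
          * !![b, b; t - a, -t - a] = (1 : Matrix (Fin 2) (Fin 2) k) := by
        ext i j
        fin_cases i <;> fin_cases j <;>
          simp [Matrix.mul_apply, Fin.sum_univ_two, Matrix.one_apply] <;> field_simp <;> ring
      rw [mul_assoc, hAQ, ← mul_assoc, h1, one_mul]
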